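/- arXiv:1502.02391 — 2 statements merged into one kernel-verified Lean document; each statement's English description precedes it below -/
import Mathlib

section
/- Let Γ, H and A be countable groups such that Γ is ICC and A is virtually abelian. Assume there exists an injective group homomorphism Φ : Γ → H × A such that π_A ∘ Φ maps Γ onto A, where π_A : H × A → A denotes the canonical projection. Then there exist a finite-index subgroup Γ₀ of Γ and an injective group homomorphism ρ : Γ₀ → H. -/
/-- Let Γ, H and A be countable groups such that Γ is ICC and A is
virtually abelian. Assume there exists an injective group homomorphism Φ : Γ → H × A
such that π_A ∘ Φ maps Γ onto A. Then there exist a finite-index subgroup Γ₀ of Γ and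
an injective group homomorphism ρ : Γ₀ → H. -/
theorem abelian_reduction
    {Γ H A : Type*} [Group Γ] [Group H] [Group A]
    [Countable Γ] [Countable H] [Countable A]
    (hICC : ∀ γ : Γ, γ ≠ 1 → {x : Γ | ∃ h : Γ, h * γ * h⁻¹ = x}.Infinite)
    (hVA : ∃ B : Subgroup A, B.FiniteIndex ∧ ∀ x y : A, x ∈ B → y ∈ B → x * y = y * x)
    (Φ : Γ →* H × A) (hΦ : Function.Injective Φ)
    (hsurj : Function.Surjective ((MonoidHom.snd H A).comp Φ)) :
    ∃ Γ₀ : Subgroup Γ, Γ₀.FiniteIndex ∧ ∃ ρ : Γ₀ →* H, Function.Injective ρ := by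
  obtain ⟨B, hBfi, hBab⟩ := hVA
  set f := (MonoidHom.snd H A).comp Φ with hf
  set Γ₀ := B.comap f with hΓ₀
  have hidx : Γ₀.index = B.index := by
    rw [hΓ₀, Subgroup.index_comap, MonoidHom.range_eq_top.mpr hsurj,
      Subgroup.relIndex_top_right]
  have hΓ₀fi : Γ₀.FiniteIndex := ⟨by rw [hidx]; exact hBfi.index_ne_zero⟩
  refine ⟨Γ₀, hΓ₀fi, (MonoidHom.fst H A).comp (Φ.comp Γ₀.subtype), ?_⟩
  rw [injective_iff_map_eq_one]
  intro γ hγ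
  have h1 : (Φ (γ : Γ)).1 = 1 := hγ
  have haB : (Φ (γ : Γ)).2 ∈ B := γ.2
  -- the conjugation map factors through the finite quotient Γ ⧸ Γ₀
  have hkey : ∀ h₁ h₂ : Γ, h₁⁻¹ * h₂ ∈ Γ₀ →
      h₁ * (γ : Γ) * h₁⁻¹ = h₂ * (γ : Γ) * h₂⁻¹ := by
    intro h₁ h₂ hmem
    have hb : (Φ h₁).2⁻¹ * (Φ h₂).2 ∈ B := by
      simpa [hΓ₀, hf, Subgroup.mem_comap, map_mul, map_inv] using hmem
    apply hΦ
    have hcomm : ((Φ h₁).2⁻¹ * (Φ h₂).2) * (Φ (γ : Γ)).2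
        = (Φ (γ : Γ)).2 * ((Φ h₁).2⁻¹ * (Φ h₂).2) := hBab _ _ hb haB
    have h2 : (Φ h₁).2 * (Φ (γ : Γ)).2 * (Φ h₁).2⁻¹
        = (Φ h₂).2 * (Φ (γ : Γ)).2 * (Φ h₂).2⁻¹ := by
      have : (Φ h₂).2 = (Φ h₁).2 * ((Φ h₁).2⁻¹ * (Φ h₂).2) := by group
      rw [this]
      calc (Φ h₁).2 * (Φ (γ:Γ)).2 * (Φ h₁).2⁻¹
          = (Φ h₁).2 * ((((Φ h₁).2⁻¹ * (Φ h₂).2) * (Φ (γ:Γ)).2) *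
              ((Φ h₁).2⁻¹ * (Φ h₂).2)⁻¹) * (Φ h₁).2⁻¹ := by
            rw [hcomm]; group
        _ = (Φ h₁).2 * ((Φ h₁).2⁻¹ * (Φ h₂).2) * (Φ (γ:Γ)).2 *
              ((Φ h₁).2 * ((Φ h₁).2⁻¹ * (Φ h₂).2))⁻¹ := by group
    have e : ∀ h : Γ, Φ (h * (γ : Γ) * h⁻¹)
        = ((Φ h).1 * (Φ h).1⁻¹, (Φ h).2 * (Φ (γ : Γ)).2 * (Φ h).2⁻¹) := by
      intro h
      rw [map_mul, map_mul, map_inv]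
      ext
      · simp [h1]
      · simp
    rw [e h₁, e h₂]
    ext
    · simp
    · simpa using h2
  haveI : Finite (Γ ⧸ Γ₀) := Γ₀.finite_quotient_of_finiteIndex
  have hset : {x : Γ | ∃ h : Γ, h * (γ : Γ) * h⁻¹ = x}.Finite := by
    let F : Γ ⧸ Γ₀ → Γ := Quotient.lift (fun h : Γ => h * (γ : Γ) * h⁻¹)
      (fun a b hab => hkey a b ((QuotientGroup.leftRel_apply).mp hab))
    have : {x : Γ | ∃ h : Γ, h * (γ : Γ) * h⁻¹ = x} = Set.range F := by
      ext x
      constructor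
      · rintro ⟨h, rfl⟩; exact ⟨QuotientGroup.mk h, rfl⟩
      · rintro ⟨q, rfl⟩
        obtain ⟨h, rfl⟩ := QuotientGroup.mk_surjective q
        exact ⟨h, rfl⟩
    rw [this]
    exact Set.finite_range F
  have hone : (γ : Γ) = 1 := by
    by_contra hne
    exact hICC _ hne hset
  exact Subtype.ext hone
end

section
/- Let θ : Γ → Λ be a group homomorphism and let L be a malnormal subgroup of Λ. Then for every h, k ∈ Γ \ θ⁻¹(L), one of the following holds: (1) h·θ⁻¹(L)·k⁻¹ ∩ θ⁻¹(L) = ∅; or (2) there exists ω ∈ θ⁻¹(L) such that h·θ⁻¹(L)·k⁻¹ ∩ θ⁻¹(L) = ω·ker(θ), the left coset of the kernel of θ by ω. Here h·θ⁻¹(L)·k⁻¹ denotes the set {h σ k⁻¹ : σ ∈ θ⁻¹(L)}. -/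
/-- Let θ : Γ → Λ be a group homomorphism and L a malnormal subgroup
of Λ. Then for every h, k ∈ Γ \ θ⁻¹(L), either h·θ⁻¹(L)·k⁻¹ ∩ θ⁻¹(L) = ∅, or there
exists ω ∈ θ⁻¹(L) with h·θ⁻¹(L)·k⁻¹ ∩ θ⁻¹(L) = ω·ker(θ). -/
theorem malnormal_coset_dichotomy
    {Γ Λ : Type*} [Group Γ] [Group Λ] (θ : Γ →* Λ) (L : Subgroup Λ)
    (hmal : ∀ g : Λ, g ∉ L → ∀ x : Λ, x ∈ L → g * x * g⁻¹ ∈ L → x = 1)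
    (h k : Γ) (hh : h ∉ L.comap θ) (hk : k ∉ L.comap θ) :
    ({x : Γ | ∃ σ ∈ L.comap θ, x = h * σ * k⁻¹} ∩ (L.comap θ : Set Γ) = ∅) ∨
      (∃ ω ∈ L.comap θ,
        {x : Γ | ∃ σ ∈ L.comap θ, x = h * σ * k⁻¹} ∩ (L.comap θ : Set Γ)
          = {x : Γ | ∃ n ∈ θ.ker, x = ω * n}) := by
  by_cases hne : {x : Γ | ∃ σ ∈ L.comap θ, x = h * σ * k⁻¹} ∩ (L.comap θ : Set Γ) = ∅
  · exact Or.inl hne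
  · right
    obtain ⟨ω, hω1, hω2⟩ := Set.nonempty_iff_ne_empty.mpr hne
    refine ⟨ω, hω2, ?_⟩
    obtain ⟨σ, hσ, hωeq⟩ := hω1
    ext x
    simp only [Set.mem_inter_iff, Set.mem_setOf_eq, SetLike.mem_coe, Subgroup.mem_comap,
      MonoidHom.mem_ker] at *
    constructor
    · rintro ⟨⟨σ', hσ', rfl⟩, hxL⟩
      refine ⟨ω⁻¹ * (h * σ' * k⁻¹), ?_, by group⟩
      have hkL : θ k ∉ L := hk
      have hmem : θ k * θ (σ⁻¹ * σ') * (θ k)⁻¹ ∈ L := by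
        have : θ (ω⁻¹ * (h * σ' * k⁻¹)) ∈ L := by simpa [map_mul, map_inv] using L.mul_mem (L.inv_mem hω2) hxL
        have heq : ω⁻¹ * (h * σ' * k⁻¹) = k * (σ⁻¹ * σ') * k⁻¹ := by
          rw [hωeq]; group
        rw [heq] at this
        simpa [map_mul, map_inv] using this
      have h1 : θ (σ⁻¹ * σ') = 1 :=
        hmal (θ k) hkL _ (by simpa [map_mul, map_inv] using L.mul_mem (L.inv_mem hσ) hσ') hmem
      have : θ (ω⁻¹ * (h * σ' * k⁻¹)) = 1 := by
        have heq : ω⁻¹ * (h * σ' * k⁻¹) = k * (σ⁻¹ * σ') * k⁻¹ := by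
          rw [hωeq]; group
        rw [heq]; simp [map_mul, map_inv, h1]
      exact this
    · rintro ⟨n, hn, rfl⟩
      have hσn : θ (σ * (k⁻¹ * n * k)) ∈ L := by
        simp [map_mul, map_inv, hn, hσ]
      refine ⟨⟨σ * (k⁻¹ * n * k), hσn, by rw [hωeq]; group⟩, ?_⟩
      simp [map_mul, hn, hω2]
end
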